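/- Assume g is nondegenerate and dim V = 2n+1. If κ > −1, set λ := √(1+κ) and T := h; if κ < −1, set λ := √(−1−κ) and T := φ∘h. Then there exist vectors X₁, …, Xₙ ∈ ker(T − λ·id) such that (X₁, …, Xₙ, φ(X₁), …, φ(Xₙ), ξ) is a basis of V which is pairwise g-orthogonal, with g(Xᵢ,Xᵢ) = ±1, g(φ(Xᵢ),φ(Xᵢ)) = −g(Xᵢ,Xᵢ), g(ξ,ξ) = 1, T(Xᵢ) = λ·Xᵢ and T(φ(Xᵢ)) = −λ·φ(Xᵢ) for every i. (Existence of an orthogonal φ-basis of eigenvectors of h, respectively of φ∘h.) -/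

import Mathlib

open Module

lemma norm_aux_17 (d : ℝ) (hd : d ≠ 0) :
    (Real.sqrt |d|)⁻¹ * ((Real.sqrt |d|)⁻¹ * d) = d / |d| := by
  have habs : (0:ℝ) < |d| := abs_pos.2 hd
  have hsq : Real.sqrt |d| * Real.sqrt |d| = |d| := Real.mul_self_sqrt (abs_nonneg d)
  have hs : Real.sqrt |d| ≠ 0 := by positivity
  field_simp
  try nlinarith [hsq]
  try ring_nf
  try nlinarith [hsq]

lemma sign_aux_17 (d : ℝ) (hd : d ≠ 0) : d / |d| = 1 ∨ d / |d| = -1 := by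
  rcases lt_or_gt_of_ne hd with hlt | hgt
  · right; rw [abs_of_neg hlt, div_neg, div_self hd]
  · left; rw [abs_of_pos hgt, div_self hd]

theorem key_17
    {V : Type*} [AddCommGroup V] [Module ℝ V] [FiniteDimensional ℝ V]
    (ξ : V) (η : V →ₗ[ℝ] ℝ) (φ T : V →ₗ[ℝ] V) (lam : ℝ)
    (g : V →ₗ[ℝ] V →ₗ[ℝ] ℝ)
    (hηξ : η ξ = 1)
    (hφ2 : ∀ v, φ (φ v) = v - η v • ξ)
    (hηφ : ∀ v, η (φ v) = 0)
    (hgsymm : ∀ X Y, g X Y = g Y X)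
    (hgφ : ∀ X Y, g (φ X) (φ Y) = - g X Y + η X * η Y)
    (hgξ : ∀ v, g v ξ = η v)
    (hξξ : g ξ ξ = 1)
    (hgT : ∀ X Y, g (T X) Y = g X (T Y))
    (hηT : ∀ v, η (T v) = 0)
    (hTφ : ∀ v, T (φ v) = - φ (T v))
    (hT2 : ∀ v, η v = 0 → T (T v) = (lam * lam) • v)
    (hlam : 0 < lam)
    (n : ℕ) (hdim : Module.finrank ℝ V = 2 * n + 1)
    (hgnd : ∀ v : V, (∀ w, g v w = 0) → v = 0) :
    ∃ X : Fin n → V, ∃ f : (Fin n ⊕ Fin n ⊕ Unit) → V,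
      f = Sum.elim X (Sum.elim (fun i => φ (X i)) (fun _ => ξ)) ∧
      (∀ i, T (X i) = lam • X i) ∧
      (∀ i, T (φ (X i)) = (-lam) • φ (X i)) ∧
      LinearIndependent ℝ f ∧
      Submodule.span ℝ (Set.range f) = ⊤ ∧
      (∀ j j', j ≠ j' → g (f j) (f j') = 0) ∧
      (∀ i, g (X i) (X i) = 1 ∨ g (X i) (X i) = -1) ∧
      (∀ i, g (φ (X i)) (φ (X i)) = - g (X i) (X i)) ∧
      g ξ ξ = 1 := by
  have hlam0 : lam ≠ 0 := ne_of_gt hlam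
  set E : Submodule ℝ V := LinearMap.ker (T - lam • LinearMap.id) with hE
  set F : Submodule ℝ V := LinearMap.ker (T + lam • LinearMap.id) with hF
  have hmemE : ∀ v, v ∈ E ↔ T v = lam • v := by
    intro v
    simp [hE, LinearMap.mem_ker, LinearMap.sub_apply, LinearMap.smul_apply,
      LinearMap.id_apply, sub_eq_zero]
  have hmemF : ∀ v, v ∈ F ↔ T v = (-lam) • v := by
    intro v
    simp only [hF, LinearMap.mem_ker, LinearMap.add_apply, LinearMap.smul_apply,
      LinearMap.id_apply, add_eq_zero_iff_eq_neg, neg_smul]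
  have hηE : ∀ v ∈ E, η v = 0 := by
    intro v hv
    have h1 : η (T v) = 0 := hηT v
    rw [(hmemE v).1 hv] at h1
    simpa [hlam0] using h1
  have hηF : ∀ v ∈ F, η v = 0 := by
    intro v hv
    have h1 : η (T v) = 0 := hηT v
    rw [(hmemF v).1 hv] at h1
    simp only [map_smul, smul_eq_mul, mul_eq_zero, neg_eq_zero] at h1
    tauto
  -- orthogonality between eigenvectors for lam and -lam
  have horth : ∀ x y : V, T x = lam • x → T y = (-lam) • y → g x y = 0 := by
    intro x y hx hy
    have h1 : g (T x) y = g x (T y) := hgT x y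
    rw [hx, hy] at h1
    simp only [map_smul, LinearMap.smul_apply, smul_eq_mul, neg_mul, neg_smul, map_neg,
      LinearMap.neg_apply] at h1
    have : lam * g x y = 0 := by linarith
    rcases mul_eq_zero.1 this with h | h
    · exact absurd h hlam0
    · exact h
  -- the kernel of η
  have hηsurj : LinearMap.range η = ⊤ := by
    rw [LinearMap.range_eq_top]
    intro c
    exact ⟨c • ξ, by simp [hηξ]⟩
  have hkerη : Module.finrank ℝ (LinearMap.ker η) = 2 * n := by
    have h1 := LinearMap.finrank_range_add_finrank_ker η
    rw [hηsurj, finrank_top, hdim] at h1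
    have : Module.finrank ℝ ℝ = 1 := Module.finrank_self ℝ
    omega
  -- E ⊔ F = ker η
  have hsup : E ⊔ F = LinearMap.ker η := by
    apply le_antisymm
    · exact sup_le (fun v hv => LinearMap.mem_ker.2 (hηE v hv))
        (fun v hv => LinearMap.mem_ker.2 (hηF v hv))
    · intro v hv
      have hηv : η v = 0 := LinearMap.mem_ker.1 hv
      have hT2v := hT2 v hηv
      have he : ((2 * lam)⁻¹) • (T v + lam • v) ∈ E := by
        rw [hmemE]
        rw [map_smul, map_add, hT2v, map_smul]
        match_scalars <;> (field_simp; try ring)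
      have hf : ((2 * lam)⁻¹) • (lam • v - T v) ∈ F := by
        rw [hmemF]
        rw [map_smul, map_sub, hT2v, map_smul]
        match_scalars <;> (field_simp; try ring)
      have hvsum : v = ((2 * lam)⁻¹) • (T v + lam • v) + ((2 * lam)⁻¹) • (lam • v - T v) := by
        match_scalars <;> (field_simp; try ring)
      rw [hvsum]
      exact Submodule.add_mem_sup he hf
  have hinf : E ⊓ F = ⊥ := by
    rw [Submodule.eq_bot_iff]
    intro x hx
    have h1 : T x = lam • x := (hmemE x).1 hx.1
    have h2 : T x = (-lam) • x := (hmemF x).1 hx.2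
    have h3 : (lam - (-lam)) • x = 0 := by rw [sub_smul, h1.symm.trans h2]; simp [sub_smul]
    rcases smul_eq_zero.1 h3 with h | h
    · exfalso; apply hlam0; linarith [h, sub_eq_zero.1 (by linarith : lam - -lam = 0)]
    · exact h
  -- φ swaps E and F
  have hmapEF : E.map φ = F := by
    apply le_antisymm
    · rintro _ ⟨x, hx, rfl⟩
      rw [hmemF, hTφ, (hmemE x).1 hx]; simp
    · intro y hy
      have hηy : η y = 0 := hηF y hy
      have : y = φ (φ y) := by rw [hφ2, hηy, zero_smul, sub_zero]
      rw [this]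
      refine Submodule.mem_map_of_mem ?_
      rw [hmemE, hTφ, (hmemF y).1 hy]; simp
  have hmapFE : F.map φ = E := by
    apply le_antisymm
    · rintro _ ⟨x, hx, rfl⟩
      rw [hmemE, hTφ, (hmemF x).1 hx]; simp
    · intro y hy
      have hηy : η y = 0 := hηE y hy
      have : y = φ (φ y) := by rw [hφ2, hηy, zero_smul, sub_zero]
      rw [this]
      refine Submodule.mem_map_of_mem ?_
      rw [hmemF, hTφ, (hmemE y).1 hy]; simp
  have hrankEF : Module.finrank ℝ E = Module.finrank ℝ F := by
    have h1 : Module.finrank ℝ F ≤ Module.finrank ℝ E := by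
      rw [← hmapEF]; exact Submodule.finrank_map_le φ E
    have h2 : Module.finrank ℝ E ≤ Module.finrank ℝ F := by
      rw [← hmapFE]; exact Submodule.finrank_map_le φ F
    omega
  have hrankE : Module.finrank ℝ E = n := by
    have h1 := Submodule.finrank_sup_add_finrank_inf_eq E F
    rw [hsup, hinf, hkerη, finrank_bot] at h1
    omega
  -- nondegeneracy of g on E
  have hndE : ∀ x, x ∈ E → (∀ y ∈ E, g x y = 0) → x = 0 := by
    intro x hxE hx
    apply hgnd
    intro w
    have hw : w - η w • ξ ∈ E ⊔ F := by
      rw [hsup, LinearMap.mem_ker, map_sub, map_smul]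
      simp [hηξ]
    obtain ⟨e, he, f', hf', hef⟩ := Submodule.mem_sup.1 hw
    have hwdecomp : w = η w • ξ + e + f' := by
      rw [show η w • ξ + e + f' = η w • ξ + (e + f') by abel, hef]; abel
    rw [hwdecomp, map_add, map_add, map_smul]
    rw [hx e he, horth x f' ((hmemE x).1 hxE) ((hmemF f').1 hf'), hgξ]
    simp [hηE x hxE]
  -- orthogonal basis of E
  have hsymmE : (LinearMap.BilinForm.restrict g E).IsSymm := ⟨fun x y => hgsymm (x : V) (y : V)⟩
  obtain ⟨b0, hb0⟩ := LinearMap.BilinForm.exists_orthogonal_basis (LinearMap.BilinForm.isSymm_iff.1 hsymmE)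
  let b : Basis (Fin n) ℝ E := b0.reindex (finCongr hrankE)
  have hb : ∀ i j : Fin n, i ≠ j → g (b i) (b j) = 0 := by
    intro i j hij
    have h0 := LinearMap.BilinForm.iIsOrtho_def.1 hb0 ((finCongr hrankE).symm i)
      ((finCongr hrankE).symm j) ((Equiv.injective _).ne hij)
    rw [LinearMap.BilinForm.restrict_apply] at h0
    have hbi : ((b i : E) : V) = (b0 ((finCongr hrankE).symm i) : V) := by
      rw [Module.Basis.reindex_apply]
    have hbj : ((b j : E) : V) = (b0 ((finCongr hrankE).symm j) : V) := by
      rw [Module.Basis.reindex_apply]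
    rw [hbi, hbj]
    exact h0
  have hdiag : ∀ i : Fin n, g (b i) (b i) ≠ 0 := by
    intro i h0
    have hzero : ∀ y ∈ E, g ((b i : V)) y = 0 := by
      intro y hy
      have hrepr : (⟨y, hy⟩ : E) = Finset.univ.sum fun j => (b.repr ⟨y, hy⟩) j • b j :=
        (b.sum_repr ⟨y, hy⟩).symm
      have : y = Finset.univ.sum fun j => (b.repr ⟨y, hy⟩) j • (b j : V) := by
        have := congrArg (Subtype.val) hrepr
        simpa only [Submodule.coe_sum, Submodule.coe_smul] using this
      rw [this, map_sum]
      apply Finset.sum_eq_zero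
      intro j _
      rw [map_smul, smul_eq_mul]
      rcases eq_or_ne i j with rfl | hij
      · rw [h0, mul_zero]
      · rw [hb i j hij, mul_zero]
    have := hndE (b i) (b i).2 hzero
    exact b.ne_zero i (by exact_mod_cast this)
  -- normalized vectors
  set X : Fin n → V := fun i => (Real.sqrt |g (b i) (b i)|)⁻¹ • (b i : V) with hXdef
  have hXE : ∀ i, X i ∈ E := fun i => Submodule.smul_mem E _ (b i).2
  have hηX : ∀ i, η (X i) = 0 := fun i => hηE _ (hXE i)
  have hTX : ∀ i, T (X i) = lam • X i := fun i => (hmemE _).1 (hXE i)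
  have hTφX : ∀ i, T (φ (X i)) = (-lam) • φ (X i) := by
    intro i
    rw [hTφ, hTX]; simp
  have hφXF : ∀ i, φ (X i) ∈ F := fun i => (hmemF _).2 (hTφX i)
  have hgXc : ∀ i j, g (X i) (X j) =
      (Real.sqrt |g (b i) (b i)|)⁻¹ * ((Real.sqrt |g (b j) (b j)|)⁻¹ * g (b i) (b j)) := by
    intro i j
    rw [show X i = (Real.sqrt |g (b i) (b i)|)⁻¹ • (b i : V) from rfl,
        show X j = (Real.sqrt |g (b j) (b j)|)⁻¹ • (b j : V) from rfl,
        map_smul, map_smul]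
    simp only [LinearMap.smul_apply, smul_eq_mul]
    ring
  have hgXX : ∀ i, g (X i) (X i) = g (b i) (b i) / |g (b i) (b i)| := by
    intro i
    rw [hgXc i i]
    exact norm_aux_17 _ (hdiag i)
  have hgXX1 : ∀ i, g (X i) (X i) = 1 ∨ g (X i) (X i) = -1 := by
    intro i
    rw [hgXX i]
    exact sign_aux_17 _ (hdiag i)
  have hgXXne : ∀ i, g (X i) (X i) ≠ 0 := by
    intro i
    rcases hgXX1 i with h | h <;> rw [h] <;> norm_num
  have hXXo : ∀ i j : Fin n, i ≠ j → g (X i) (X j) = 0 := by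
    intro i j hij
    rw [hgXc i j, hb i j hij]
    ring
  have hgφX : ∀ i j, g (φ (X i)) (φ (X j)) = - g (X i) (X j) := by
    intro i j
    rw [hgφ, hηX, hηX]
    ring
  have hXφo : ∀ i j, g (X i) (φ (X j)) = 0 :=
    fun i j => horth _ _ (hTX i) (hTφX j)
  have hXξo : ∀ i, g (X i) ξ = 0 := by
    intro i; rw [hgξ, hηX]
  have hφXξo : ∀ i, g (φ (X i)) ξ = 0 := by
    intro i; rw [hgξ, hηφ]
  set f : (Fin n ⊕ Fin n ⊕ Unit) → V :=
    Sum.elim X (Sum.elim (fun i => φ (X i)) (fun _ => ξ)) with hfdef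
  have hforth : ∀ j j', j ≠ j' → g (f j) (f j') = 0 := by
    rintro (i | i | ⟨⟩) (i' | i' | ⟨⟩) hne <;>
      simp only [hfdef, Sum.elim_inl, Sum.elim_inr]
    · exact hXXo i i' (fun h => hne (by rw [h]))
    · exact hXφo i i'
    · exact hXξo i
    · rw [hgsymm]; exact hXφo i' i
    · rw [hgφX]; rw [hXXo i i' (fun h => hne (by rw [h]))]; ring
    · exact hφXξo i
    · rw [hgsymm]; exact hXξo i'
    · rw [hgsymm]; exact hφXξo i'
    · exact absurd rfl hne
  have hfdiag : ∀ j, g (f j) (f j) ≠ 0 := by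
    rintro (i | i | ⟨⟩) <;> simp only [hfdef, Sum.elim_inl, Sum.elim_inr]
    · exact hgXXne i
    · rw [hgφX]; simpa using hgXXne i
    · rw [hξξ]; norm_num
  have hli : LinearIndependent ℝ f :=
    LinearMap.BilinForm.linearIndependent_of_iIsOrtho
      (LinearMap.BilinForm.iIsOrtho_def.2 hforth) (fun j h => hfdiag j h)
  have hcard : Fintype.card (Fin n ⊕ Fin n ⊕ Unit) = Module.finrank ℝ V := by
    simp [hdim]; omega
  have hspan : Submodule.span ℝ (Set.range f) = ⊤ :=
    hli.span_eq_top_of_card_eq_finrank' hcard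
  exact ⟨X, f, hfdef, hTX, hTφX, hli, hspan, hforth, hgXX1, fun i => hgφX i i, hξξ⟩

theorem stmt_17
    {V : Type*} [AddCommGroup V] [Module ℝ V]
    (ξ : V) (η : V →ₗ[ℝ] ℝ) (φ h : V →ₗ[ℝ] V) (κ : ℝ)
    (hηξ : η ξ = 1)
    (hφ2 : ∀ v, φ (φ v) = v - η v • ξ)
    (hφξ : φ ξ = 0)
    (hηφ : ∀ v, η (φ v) = 0)
    (hhξ : h ξ = 0)
    (hηh : ∀ v, η (h v) = 0)
    (hhφ : ∀ v, h (φ v) = - φ (h v))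
    (hh2 : ∀ v, h (h v) = (1 + κ) • φ (φ v))
    (g : V →ₗ[ℝ] V →ₗ[ℝ] ℝ)
    (hgsymm : ∀ X Y, g X Y = g Y X)
    (hgφ : ∀ X Y, g (φ X) (φ Y) = - g X Y + η X * η Y)
    (hgskew : ∀ X Y, g X (φ Y) = - g (φ X) Y)
    (hgh : ∀ X Y, g (h X) Y = g X (h Y))
    [FiniteDimensional ℝ V] (n : ℕ)
    (hdim : Module.finrank ℝ V = 2 * n + 1)
    (hκ : κ ≠ -1)
    (hgnd : ∀ v : V, (∀ w, g v w = 0) → v = 0)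
    (T : V →ₗ[ℝ] V) (lam : ℝ)
    (hT : T = if -1 < κ then h else φ ∘ₗ h)
    (hlam : lam = if -1 < κ then Real.sqrt (1 + κ) else Real.sqrt (-1 - κ)) :
    ∃ X : Fin n → V, ∃ f : (Fin n ⊕ Fin n ⊕ Unit) → V,
      f = Sum.elim X (Sum.elim (fun i => φ (X i)) (fun _ => ξ)) ∧
      (∀ i, T (X i) = lam • X i) ∧
      (∀ i, T (φ (X i)) = (-lam) • φ (X i)) ∧
      LinearIndependent ℝ f ∧
      Submodule.span ℝ (Set.range f) = ⊤ ∧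
      (∀ j j', j ≠ j' → g (f j) (f j') = 0) ∧
      (∀ i, g (X i) (X i) = 1 ∨ g (X i) (X i) = -1) ∧
      (∀ i, g (φ (X i)) (φ (X i)) = - g (X i) (X i)) ∧
      g ξ ξ = 1 := by
  have hgξ : ∀ v, g v ξ = η v := by
    intro v
    have h1 := hgφ v ξ
    rw [hφξ, hηξ, map_zero] at h1
    linarith
  have hξξ : g ξ ξ = 1 := by rw [hgξ, hηξ]
  by_cases hc : -1 < κ
  · -- case κ > -1 : T = h, lam = √(1+κ)
    rw [if_pos hc] at hT hlam
    have hκpos : (0:ℝ) < 1 + κ := by linarith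
    have hlampos : 0 < lam := by rw [hlam]; exact Real.sqrt_pos.2 hκpos
    have hlamsq : lam * lam = 1 + κ := by
      rw [hlam]; exact Real.mul_self_sqrt (le_of_lt hκpos)
    rw [hT]
    exact key_17 ξ η φ h lam g hηξ hφ2 hηφ hgsymm hgφ hgξ hξξ hgh hηh hhφ
      (by
        intro v hv
        rw [hh2, hφ2, hv, zero_smul, sub_zero, hlamsq])
      hlampos n hdim hgnd
  · -- case κ < -1 : T = φ ∘ h, lam = √(-1-κ)
    rw [if_neg hc] at hT hlam
    have hκneg : (0:ℝ) < -1 - κ := by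
      rcases lt_or_eq_of_le (not_lt.1 hc) with h1 | h1
      · linarith
      · exact absurd h1 hκ
    have hlampos : 0 < lam := by rw [hlam]; exact Real.sqrt_pos.2 hκneg
    have hlamsq : lam * lam = -1 - κ := by
      rw [hlam]; exact Real.mul_self_sqrt (le_of_lt hκneg)
    have hTφ : ∀ v, (φ ∘ₗ h) (φ v) = - φ ((φ ∘ₗ h) v) := by
      intro v
      simp only [LinearMap.comp_apply]
      rw [hhφ, map_neg]
    have hgT : ∀ X Y, g ((φ ∘ₗ h) X) Y = g X ((φ ∘ₗ h) Y) := by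
      intro X Y
      have e1 := hgskew X (h Y)
      have e2 := hgh (φ X) Y
      rw [hhφ X] at e2
      simp only [map_neg, LinearMap.neg_apply] at e2
      simp only [LinearMap.comp_apply]
      linarith
    have hηT : ∀ v, η ((φ ∘ₗ h) v) = 0 := by
      intro v; simp [hηφ]
    have hT2 : ∀ v, η v = 0 → (φ ∘ₗ h) ((φ ∘ₗ h) v) = (lam * lam) • v := by
      intro v hv
      simp only [LinearMap.comp_apply]
      rw [hhφ, map_neg, hh2, map_smul, map_smul, hφ2 (φ (φ v)), hηφ, zero_smul, sub_zero,
        hφ2 v, hv, zero_smul, sub_zero, hlamsq]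
      match_scalars
      ring
    rw [hT]
    exact key_17 ξ η φ (φ ∘ₗ h) lam g hηξ hφ2 hηφ hgsymm hgφ hgξ hξξ hgT hηT hTφ hT2
      hlampos n hdim hgnd
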